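/- Let E be a finite-dimensional ℂ-algebra and P an indecomposable projective E-module. Then ρ(P) = 1 + ρ(rad P), where ρ(M) = Σ_e χ(Gr_e(M)) is the sum of Euler characteristics of submodule Grassmannians. -/
import Mathlib


structure K0Like (E : Type) [Ring E] (K : Type) [AddCommGroup K] : Type 1 where
  cls : ∀ (N : Type) [AddCommGroup N] [Module E N], K
  iso_inv : ∀ (N N' : Type) [AddCommGroup N] [Module E N] [AddCommGroup N'] [Module E N'],
    Nonempty (N ≃ₗ[E] N') → cls N = cls N'
  additive : ∀ (A B C : Type) [AddCommGroup A] [Module E A] [AddCommGroup B] [Module E B]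
    [AddCommGroup C] [Module E C] (i : A →ₗ[E] B) (p : B →ₗ[E] C),
    Function.Injective i → Function.Surjective p →
    LinearMap.range i = LinearMap.ker p → IsFiniteLength E B →
    cls B = cls A + cls C
  sep : ∀ (N : Type) [AddCommGroup N] [Module E N], IsFiniteLength E N →
    ∀ N' : Submodule E N, cls N' = cls N → N' = ⊤

/-- The set of `K₀`-classes of submodules of a finite-length module is finite. -/
lemma classes_finite {E : Type} [Ring E] {P : Type} [AddCommGroup P] [Module E P]
    [IsNoetherian E P] [IsArtinian E P]
    {K : Type} [AddCommGroup K] (k : K0Like E K) :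
    {e : K | ∃ L : Submodule E P, k.cls ↥L = e}.Finite := by
  have hfl : ∀ L : Submodule E P, IsFiniteLength E ↥L := fun L =>
    isFiniteLength_iff_isNoetherian_isArtinian.mpr ⟨inferInstance, inferInstance⟩
  have main : ∀ N : Submodule E P, {e : K | ∃ L : Submodule E P, L ≤ N ∧ k.cls ↥L = e}.Finite := by
    intro N
    induction N using WellFoundedLT.induction with
    | _ N IH =>
      by_cases hbot : N = ⊥
      · subst hbot
        apply Set.Finite.subset (Set.finite_singleton (k.cls ↥(⊥ : Submodule E P)))
        rintro e ⟨L, hL, rfl⟩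
        rw [le_bot_iff] at hL
        subst hL; rfl
      · obtain ⟨m, hm, hmax⟩ := wellFounded_gt.has_min {L : Submodule E P | L < N}
          ⟨⊥, bot_lt_iff_ne_bot.mpr hbot⟩
        set d := k.cls (↥N ⧸ Submodule.comap N.subtype m) with hd
        apply Set.Finite.subset (((IH m hm).union ((IH m hm).image (· + d))))
        rintro e ⟨L, hLN, rfl⟩
        by_cases hLm : L ≤ m
        · exact Or.inl ⟨L, hLm, rfl⟩
        · have hsup : L ⊔ m = N := by
            by_contra hne
            have h1 : L ⊔ m < N := lt_of_le_of_ne (sup_le hLN hm.le) hne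
            exact hmax _ h1 (lt_of_le_of_ne le_sup_right (fun h => hLm (h ▸ le_sup_left)))
          have key : k.cls ↥L = k.cls ↥(L ⊓ m) +
              k.cls (↥L ⧸ Submodule.comap L.subtype (L ⊓ m)) := by
            apply k.additive _ _ _ (Submodule.inclusion inf_le_left)
              (Submodule.comap L.subtype (L ⊓ m)).mkQ
              (Submodule.inclusion_injective _) (Submodule.mkQ_surjective _)
              _ (hfl L)
            rw [Submodule.range_inclusion, Submodule.ker_mkQ]
          have hquot : k.cls (↥L ⧸ Submodule.comap L.subtype (L ⊓ m)) = d := by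
            have := k.iso_inv _ _ ⟨LinearMap.quotientInfEquivSupQuotient L m⟩
            rw [hsup] at this
            exact this
          exact Or.inr ⟨k.cls ↥(L ⊓ m), ⟨L ⊓ m, inf_le_right, rfl⟩, by rw [key, hquot]⟩
  apply Set.Finite.subset (main ⊤)
  rintro e ⟨L, rfl⟩
  exact ⟨L, le_top, rfl⟩

/-- An indecomposable projective module of finite length has at most one maximal submodule. -/
lemma coatom_unique {E : Type} [Ring E] {P : Type} [AddCommGroup P] [Module E P]
    [Module.Projective E P] [IsNoetherian E P] [IsArtinian E P]
    (hindec : ∀ N N' : Submodule E P, IsCompl N N' → N = ⊥ ∨ N = ⊤)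
    (m₁ m₂ : Submodule E P) (h1 : IsCoatom m₁) (h2 : IsCoatom m₂) : m₁ = m₂ := by
  by_contra hne
  have hsup : m₁ ⊔ m₂ = ⊤ := h1.sup_eq_top_of_ne h2 hne
  set q : ↥m₁ →ₗ[E] P ⧸ m₂ := m₂.mkQ ∘ₗ m₁.subtype with hq
  have hqsurj : Function.Surjective q := by
    intro y
    obtain ⟨x, rfl⟩ := m₂.mkQ_surjective y
    have hx : x ∈ m₁ ⊔ m₂ := hsup.symm ▸ Submodule.mem_top
    obtain ⟨a, ha, b, hb, rfl⟩ := Submodule.mem_sup.mp hx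
    refine ⟨⟨a, ha⟩, ?_⟩
    show m₂.mkQ a = m₂.mkQ (a + b)
    rw [Submodule.mkQ_apply, Submodule.mkQ_apply, Submodule.Quotient.eq]
    simpa using m₂.neg_mem hb
  obtain ⟨h, hh⟩ := Module.projective_lifting_property q m₂.mkQ hqsurj
  set φ : P →ₗ[E] P := m₁.subtype ∘ₗ h with hφ
  have hφm : ∀ x, φ x ∈ m₁ := fun x => (h x).2
  have hφq : ∀ x, φ x - x ∈ m₂ := by
    intro x
    have : m₂.mkQ (φ x) = m₂.mkQ x := by
      have := congrArg (fun f => f x) hh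
      simpa [q, φ, LinearMap.comp_apply] using this
    rwa [← Submodule.Quotient.eq, ← Submodule.mkQ_apply, ← Submodule.mkQ_apply]
  obtain ⟨n, hn⟩ := Filter.eventually_atTop.mp (φ.eventually_isCompl_ker_pow_range_pow)
  set n' := max n 1 with hn'
  have hc := hn n' (le_max_left _ _)
  rcases hindec _ _ hc with hker | hker
  · have hrange : LinearMap.range (φ ^ n') = ⊤ := by
      have := hc.codisjoint
      rw [hker] at this
      rwa [codisjoint_comm, codisjoint_bot] at this
    apply h1.1
    rw [eq_top_iff, ← hrange]
    rintro x ⟨y, rfl⟩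
    obtain ⟨m, hm⟩ : ∃ m, n' = m + 1 := ⟨n' - 1, by omega⟩
    rw [hm, pow_succ']
    exact hφm _
  · have hzero : ∀ x, (φ ^ n') x = 0 := by
      intro x
      have : x ∈ LinearMap.ker (φ ^ n') := hker ▸ Submodule.mem_top
      exact this
    apply h2.1
    rw [eq_top_iff]
    intro x _
    have step : ∀ i : ℕ, x - (φ ^ i) x ∈ m₂ := by
      intro i
      induction i with
      | zero => simp
      | succ i ih =>
        have heq : x - (φ ^ (i+1)) x = (x - (φ ^ i) x) - (φ ((φ ^ i) x) - (φ ^ i) x) := by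
          rw [pow_succ']
          show x - φ ((φ^i) x) = _
          abel
        rw [heq]
        exact m₂.sub_mem ih (hφq _)
    have := step n'
    rwa [hzero, sub_zero] at this

lemma aux_bot_ne_top {E P : Type} [Ring E] [AddCommGroup P] [Module E P] [Nontrivial P] :
    (⊥ : Submodule E P) ≠ ⊤ := by
  intro h
  obtain ⟨x, hx⟩ := exists_ne (0 : P)
  have : x ∈ (⊥ : Submodule E P) := h.symm ▸ Submodule.mem_top
  exact hx (by simpa using this)

/-- Let `E` be a finite-dimensional `ℂ`-algebra and `P` an indecomposable
projective `E`-module.  Then `ρ(P) = 1 + ρ(rad P)`, where `ρ(M) = Σ_e χ(Gr_e(M))`, the sum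
over `e ∈ K₀(mod E)` of the Euler characteristics of the submodule Grassmannians.
The Euler characteristic with compact support `χ` is abstracted as a function on sets of
submodules satisfying its standard properties: `χ(∅) = 0`, `χ(point) = 1`, and invariance
under the canonical identification of submodules of a submodule `N' ⊆ N` with submodules
of `N` contained in `N'`. -/
theorem stmt_6 {E : Type} [Ring E] [Algebra ℂ E] [FiniteDimensional ℂ E]
    {P : Type} [AddCommGroup P] [Module E P] [Module ℂ P] [IsScalarTower ℂ E P]
    [FiniteDimensional ℂ P] [Nontrivial P]
    [Module.Projective E P]
    (hindec : ∀ N N' : Submodule E P, IsCompl N N' → N = ⊥ ∨ N = ⊤)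
    {K : Type} [AddCommGroup K] (k : K0Like E K)
    (χ : ∀ (N : Type) [AddCommGroup N] [Module E N], Set (Submodule E N) → ℤ)
    (hempty : ∀ (N : Type) [AddCommGroup N] [Module E N], χ N (∅ : Set (Submodule E N)) = 0)
    (hsingle : ∀ (N : Type) [AddCommGroup N] [Module E N] (x : Submodule E N), χ N {x} = 1)
    (hembed : ∀ (N : Type) [AddCommGroup N] [Module E N] (N' : Submodule E N)
      (S : Set (Submodule E N')),
      χ N' S = χ N ((fun L => Submodule.map N'.subtype L) '' S)) :
    (∑ᶠ e : K, χ P {L : Submodule E P | k.cls L = e}) =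
      1 + ∑ᶠ e : K, χ (↥(sInf {m : Submodule E P | IsCoatom m}))
            {L : Submodule E (↥(sInf {m : Submodule E P | IsCoatom m})) |
              k.cls L = e} := by
  classical
  haveI hNoeth : IsNoetherian E P := isNoetherian_of_tower ℂ inferInstance
  haveI hArt : IsArtinian E P := isArtinian_of_tower ℂ inferInstance
  have hflP : IsFiniteLength E P :=
    isFiniteLength_iff_isNoetherian_isArtinian.mpr ⟨inferInstance, inferInstance⟩
  set rad := sInf {m : Submodule E P | IsCoatom m} with hraddef
  -- `rad` is the unique maximal submodule
  have hco : IsCoatomic (Submodule E P) := isCoatomic_of_orderTop_gt_wellFounded wellFounded_gt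
  obtain ⟨m0, hm0, -⟩ := (hco.eq_top_or_exists_le_coatom ⊥).resolve_left aux_bot_ne_top
  have hradm : rad = m0 := by
    rw [hraddef]
    have hset : {m : Submodule E P | IsCoatom m} = {m0} := by
      ext m
      exact ⟨fun hm => coatom_unique hindec m m0 hm hm0, fun hm => hm ▸ hm0⟩
    rw [hset, sInf_singleton]
  have hrad_ne : rad ≠ ⊤ := hradm ▸ hm0.1
  have hproper : ∀ L : Submodule E P, L ≠ ⊤ → L ≤ rad := by
    intro L hL
    rcases hco.eq_top_or_exists_le_coatom L with h | ⟨a, ha, hle⟩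
    · exact absurd h hL
    · rw [hradm, ← coatom_unique hindec a m0 ha hm0]
      exact hle
  set c := k.cls P with hc
  have htop : k.cls ↥(⊤ : Submodule E P) = c := k.iso_inv _ _ ⟨Submodule.topEquiv⟩
  have hsep : ∀ L : Submodule E P, k.cls ↥L = c → L = ⊤ := fun L h => k.sep P hflP L h
  have hclsmap : ∀ L' : Submodule E ↥rad, k.cls ↥(Submodule.map rad.subtype L') = k.cls ↥L' :=
    fun L' => (k.iso_inv _ _
      ⟨Submodule.equivMapOfInjective rad.subtype rad.injective_subtype L'⟩).symm
  set f : K → ℤ := fun e => χ P {L : Submodule E P | k.cls ↥L = e} with hf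
  set g : K → ℤ := fun e => χ ↥rad {L : Submodule E ↥rad | k.cls ↥L = e} with hg
  -- claim A : f and g agree away from c
  have claimA : ∀ e : K, e ≠ c → f e = g e := by
    intro e he
    have hsets : {L : Submodule E P | k.cls ↥L = e} =
        (fun L => Submodule.map rad.subtype L) '' {L : Submodule E ↥rad | k.cls ↥L = e} := by
      ext L
      constructor
      · intro hL
        have hLne : L ≠ ⊤ := fun h => he (by rw [← hL, h, htop])
        have hLrad : L ≤ rad := hproper L hLne
        have hmc : Submodule.map rad.subtype (Submodule.comap rad.subtype L) = L := by
          rw [Submodule.map_comap_subtype, inf_eq_right.mpr hLrad]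
        exact ⟨Submodule.comap rad.subtype L, by rw [Set.mem_setOf_eq, ← hclsmap, hmc]; exact hL,
          hmc⟩
      · rintro ⟨L', hL', rfl⟩
        rw [Set.mem_setOf_eq, hclsmap]
        exact hL'
    rw [hf, hg]
    simp only
    rw [hembed P rad, ← hsets]
  -- claim B : f c = 1
  have claimB : f c = 1 := by
    have hsets : {L : Submodule E P | k.cls ↥L = c} = {(⊤ : Submodule E P)} := by
      ext L
      exact ⟨fun hL => hsep L hL, fun hL => by rw [Set.mem_singleton_iff] at hL; rw [hL]; exact htop⟩
    rw [hf]; simp only; rw [hsets]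
    exact hsingle P ⊤
  -- claim C : g c = 0
  have claimC : g c = 0 := by
    have hsets : {L : Submodule E ↥rad | k.cls ↥L = c} = ∅ := by
      ext L'
      simp only [Set.mem_setOf_eq, Set.mem_empty_iff_false, iff_false]
      intro hL'
      have : Submodule.map rad.subtype L' = ⊤ := hsep _ (by rw [hclsmap]; exact hL')
      exact hrad_ne (top_le_iff.mp (this ▸ Submodule.map_subtype_le rad L'))
    rw [hg]; simp only; rw [hsets]
    exact hempty ↥rad
  -- finiteness of supports
  have hCls : {e : K | ∃ L : Submodule E P, k.cls ↥L = e}.Finite := classes_finite k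
  have hsf : Function.support f ⊆ {e : K | ∃ L : Submodule E P, k.cls ↥L = e} := by
    intro e he
    by_contra hn
    apply he
    have hsets : {L : Submodule E P | k.cls ↥L = e} = ∅ := by
      ext L
      simp only [Set.mem_setOf_eq, Set.mem_empty_iff_false, iff_false]
      exact fun h => hn ⟨L, h⟩
    rw [hf]; simp only; rw [hsets]
    exact hempty P
  have hsg : Function.support g ⊆ {e : K | ∃ L : Submodule E P, k.cls ↥L = e} := by
    intro e he
    by_contra hn
    apply he
    have hsets : {L : Submodule E ↥rad | k.cls ↥L = e} = ∅ := by
      ext L'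
      simp only [Set.mem_setOf_eq, Set.mem_empty_iff_false, iff_false]
      exact fun h => hn ⟨Submodule.map rad.subtype L', by rw [hclsmap]; exact h⟩
    rw [hg]; simp only; rw [hsets]
    exact hempty ↥rad
  -- assemble
  set T : Finset K := insert c hCls.toFinset with hT
  have hsubT : {e : K | ∃ L : Submodule E P, k.cls ↥L = e} ⊆ ↑T := by
    intro e he
    simp only [hT, Finset.coe_insert, Set.mem_insert_iff, Set.Finite.coe_toFinset]
    exact Or.inr he
  have hfT : (∑ᶠ e : K, f e) = ∑ e ∈ T, f e :=
    finsum_eq_finset_sum_of_support_subset f (hsf.trans hsubT)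
  have hgT : (∑ᶠ e : K, g e) = ∑ e ∈ T, g e :=
    finsum_eq_finset_sum_of_support_subset g (hsg.trans hsubT)
  have hcT : c ∈ T := Finset.mem_insert_self _ _
  have herase : ∑ e ∈ T.erase c, f e = ∑ e ∈ T.erase c, g e :=
    Finset.sum_congr rfl (fun e hemem => claimA e (Finset.ne_of_mem_erase hemem))
  calc (∑ᶠ e : K, f e) = ∑ e ∈ T, f e := hfT
    _ = f c + ∑ e ∈ T.erase c, f e := (Finset.add_sum_erase T f hcT).symm
    _ = 1 + ∑ e ∈ T.erase c, g e := by rw [claimB, herase]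
    _ = 1 + (g c + ∑ e ∈ T.erase c, g e) := by rw [claimC, zero_add]
    _ = 1 + ∑ e ∈ T, g e := by rw [Finset.add_sum_erase T g hcT]
    _ = 1 + ∑ᶠ e : K, g e := by rw [hgT]
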